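/- Sylvester's inertia theorem for congruence by positive diagonal scaling: let T' be a real symmetric N×N matrix and let f, g : Fin N → ℝ be strictly positive functions. Set T = diag(f)·T'·diag(g). Then T has real spectrum, and the number of positive eigenvalues of T (counted with algebraic multiplicity) equals the number of positive eigenvalues of T', and similarly for negative eigenvalues. -/

import Mathlib

open Matrix Polynomial


/-- The spectral radius of a real square matrix: the supremum of the moduli of its
complex eigenvalues (roots of the characteristic polynomial over `ℂ`). -/
noncomputable def specRad {N : ℕ} (M : Matrix (Fin N) (Fin N) ℝ) : ℝ :=
  sSup {r : ℝ | ∃ z : ℂ, ((M.map (algebraMap ℝ ℂ)).charpoly).IsRoot z ∧ r = ‖z‖}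

open Classical in
/-- Number of positive eigenvalues of a real matrix, counted with algebraic
multiplicity (as roots of the characteristic polynomial over `ℂ`). -/
noncomputable def posEigCount {N : ℕ} (M : Matrix (Fin N) (Fin N) ℝ) : ℕ :=
  (((M.map (algebraMap ℝ ℂ)).charpoly).roots.filter (fun z => z.im = 0 ∧ 0 < z.re)).card

open Classical in
/-- Number of negative eigenvalues of a real matrix, counted with algebraic
multiplicity. -/
noncomputable def negEigCount {N : ℕ} (M : Matrix (Fin N) (Fin N) ℝ) : ℕ :=
  (((M.map (algebraMap ℝ ℂ)).charpoly).roots.filter (fun z => z.im = 0 ∧ z.re < 0)).card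


lemma isHermitian_of_isSymm {N : ℕ} {M : Matrix (Fin N) (Fin N) ℝ} (h : M.IsSymm) :
    M.IsHermitian := by
  rw [Matrix.IsHermitian]
  ext i j
  simpa [Matrix.conjTranspose_apply] using congrFun (congrFun h i) j

lemma charpoly_mul_mul {n R : Type*} [CommRing R] [Fintype n] [DecidableEq n]
    (P A Q : Matrix n n R) (h : P * Q = 1) :
    (P * A * Q).charpoly = A.charpoly := by
  have hPQ : (C : R →+* R[X]).mapMatrix P * (C : R →+* R[X]).mapMatrix Q = 1 := by
    rw [← _root_.map_mul, h, _root_.map_one]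
  have hc : charmatrix (P * A * Q) =
      (C : R →+* R[X]).mapMatrix P * charmatrix A * (C : R →+* R[X]).mapMatrix Q := by
    rw [charmatrix, charmatrix, mul_sub, sub_mul, ← _root_.map_mul, ← _root_.map_mul]
    congr 1
    rw [mul_assoc, (scalar_commute (X : R[X]) (Commute.all X) _).eq, ← mul_assoc, hPQ, one_mul]
  rw [charpoly, charpoly, hc, det_mul, det_mul, mul_right_comm, ← det_mul, hPQ, det_one, one_mul]


lemma roots_charpoly_complex {N : ℕ} {M : Matrix (Fin N) (Fin N) ℝ} (hM : M.IsHermitian) :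
    (M.map (algebraMap ℝ ℂ)).charpoly.roots =
      (Finset.univ.val.map fun i => ((hM.eigenvalues i : ℝ) : ℂ)) := by
  have hU : (Matrix.IsHermitian.eigenvectorUnitary hM : Matrix (Fin N) (Fin N) ℝ) *
      (star (Matrix.IsHermitian.eigenvectorUnitary hM) : Matrix (Fin N) (Fin N) ℝ) = 1 :=
    Matrix.mem_unitaryGroup_iff.mp (Matrix.IsHermitian.eigenvectorUnitary hM).2
  have h1 : M.charpoly = (Matrix.diagonal hM.eigenvalues).charpoly := by
    conv_lhs => rw [hM.spectral_theorem]
    rw [show Matrix.diagonal (RCLike.ofReal ∘ hM.eigenvalues) = Matrix.diagonal hM.eigenvalues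
      from by simp [Function.comp]]
    exact charpoly_mul_mul _ _ _ hU
  have h2 : (Matrix.diagonal hM.eigenvalues).charpoly = ∏ i, (X - C (hM.eigenvalues i)) := by
    rw [Matrix.charpoly_of_upperTriangular _ (Matrix.blockTriangular_diagonal _)]
    simp
  rw [Matrix.charpoly_map, h1, h2, Polynomial.map_prod]
  simp only [Polynomial.map_sub, map_X, map_C]
  have h3 := Polynomial.roots_multiset_prod_X_sub_C
    (Finset.univ.val.map fun i : Fin N => ((hM.eigenvalues i : ℝ) : ℂ))
  rw [Multiset.map_map] at h3
  rw [← h3, Finset.prod_eq_multiset_prod]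
  rfl


lemma dot_sum {n ι : Type*} [Fintype n] (v : n → ℝ) (s : Finset ι) (w : ι → n → ℝ) :
    v ⬝ᵥ (∑ i ∈ s, w i) = ∑ i ∈ s, v ⬝ᵥ w i := by
  simp only [dotProduct, Finset.sum_apply, Finset.mul_sum]
  exact Finset.sum_comm

lemma sum_dot {n ι : Type*} [Fintype n] (v : n → ℝ) (s : Finset ι) (w : ι → n → ℝ) :
    (∑ i ∈ s, w i) ⬝ᵥ v = ∑ i ∈ s, w i ⬝ᵥ v := by
  simp only [dotProduct, Finset.sum_apply, Finset.sum_mul]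
  exact Finset.sum_comm

lemma li_of_dot {N : ℕ} {ι : Type*} [DecidableEq ι] (v : ι → Fin N → ℝ)
    (h : ∀ i j, v i ⬝ᵥ v j = if i = j then 1 else 0) : LinearIndependent ℝ v := by
  rw [linearIndependent_iff']
  intro s gc hsum i hi
  have h2 : v i ⬝ᵥ (∑ j ∈ s, gc j • v j) = gc i := by
    rw [dot_sum]
    have : ∀ j ∈ s, v i ⬝ᵥ gc j • v j = if j = i then gc j else 0 := by
      intro j _
      rw [dotProduct_smul, h i j]
      by_cases hij : i = j
      · simp [hij]
      · rw [if_neg hij, smul_zero, if_neg (fun h : j = i => hij h.symm)]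
    rw [Finset.sum_congr rfl this, Finset.sum_ite_eq' s i gc]
    simp [hi]
  rw [hsum] at h2
  simpa using h2.symm

lemma quad_eq {N : ℕ} (M : Matrix (Fin N) (Fin N) ℝ) (eig : Fin N → ℝ) (v : Fin N → Fin N → ℝ)
    (hdot : ∀ i j, v i ⬝ᵥ v j = if i = j then 1 else 0)
    (hev : ∀ i, M *ᵥ v i = eig i • v i)
    (S : Finset (Fin N)) (c : {x // x ∈ S} → ℝ) :
    (∑ i : {x // x ∈ S}, c i • v i) ⬝ᵥ (M *ᵥ ∑ i : {x // x ∈ S}, c i • v i)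
      = ∑ i : {x // x ∈ S}, eig i * (c i)^2 := by
  have hMv : M *ᵥ (∑ i : {x // x ∈ S}, c i • v i)
      = ∑ i : {x // x ∈ S}, (c i * eig i) • v i := by
    have := map_sum M.mulVecLin (fun i : {x // x ∈ S} => c i • v i) Finset.univ
    simp only [Matrix.mulVecLin_apply] at this
    rw [this]
    refine Finset.sum_congr rfl fun i _ => ?_
    rw [Matrix.mulVec_smul, hev i, smul_smul]
  rw [hMv, sum_dot]
  refine Finset.sum_congr rfl fun i _ => ?_
  rw [smul_dotProduct, dot_sum]
  have : ∀ j ∈ (Finset.univ : Finset {x // x ∈ S}),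
      v i ⬝ᵥ (c j * eig j) • v j = if j = i then c j * eig j else 0 := by
    intro j _
    rw [dotProduct_smul, hdot i j]
    by_cases hij : i = j
    · subst hij; simp
    · rw [if_neg (fun h => hij (Subtype.ext h)), if_neg (fun h : j = i => hij h.symm), smul_zero]
  rw [Finset.sum_congr rfl this, Finset.sum_ite_eq' Finset.univ i]
  simp only [Finset.mem_univ, if_true, smul_eq_mul]
  ring

open Classical in
lemma posCount_le {N : ℕ} (A B P : Matrix (Fin N) (Fin N) ℝ)
    (hA : A.IsHermitian) (hB : B.IsHermitian) (hP : IsUnit P.det)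
    (hBe : B = Pᵀ * A * P) :
    (Finset.univ.filter fun i => 0 < hB.eigenvalues i).card ≤
      (Finset.univ.filter fun i => 0 < hA.eigenvalues i).card := by
  by_contra hlt
  push_neg at hlt
  set vA : Fin N → Fin N → ℝ := fun i => ⇑(hA.eigenvectorBasis i) with hvA
  set vB : Fin N → Fin N → ℝ := fun i => ⇑(hB.eigenvectorBasis i) with hvB
  have hdotA : ∀ i j, vA i ⬝ᵥ vA j = if i = j then 1 else 0 := by
    intro i j
    have := (orthonormal_iff_ite.mp hA.eigenvectorBasis.orthonormal) i j
    simpa [PiLp.inner_apply, RCLike.inner_apply, starRingEnd_apply, dotProduct, hvA, mul_comm] using this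
  have hdotB : ∀ i j, vB i ⬝ᵥ vB j = if i = j then 1 else 0 := by
    intro i j
    have := (orthonormal_iff_ite.mp hB.eigenvectorBasis.orthonormal) i j
    simpa [PiLp.inner_apply, RCLike.inner_apply, starRingEnd_apply, dotProduct, hvB, mul_comm] using this
  have hevA : ∀ i, A *ᵥ vA i = hA.eigenvalues i • vA i := fun i => hA.mulVec_eigenvectorBasis i
  have hevB : ∀ i, B *ᵥ vB i = hB.eigenvalues i • vB i := fun i => hB.mulVec_eigenvectorBasis i
  set SB : Finset (Fin N) := Finset.univ.filter (fun i => 0 < hB.eigenvalues i) with hSB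
  set SA : Finset (Fin N) := Finset.univ.filter (fun i => ¬ 0 < hA.eigenvalues i) with hSA
  set V : Submodule ℝ (Fin N → ℝ) :=
    Submodule.span ℝ (Set.range fun i : {x // x ∈ SB} => vB i) with hV
  set W : Submodule ℝ (Fin N → ℝ) :=
    Submodule.span ℝ (Set.range fun i : {x // x ∈ SA} => vA i) with hW
  -- subfamily dot products
  have hdotB' : ∀ i j : {x // x ∈ SB}, vB i ⬝ᵥ vB j = if i = j then 1 else 0 := by
    intro i j; rw [hdotB]
    by_cases hij : i = j
    · simp [hij]
    · rw [if_neg (fun h => hij (Subtype.ext h)), if_neg hij]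
  have hdotA' : ∀ i j : {x // x ∈ SA}, vA i ⬝ᵥ vA j = if i = j then 1 else 0 := by
    intro i j; rw [hdotA]
    by_cases hij : i = j
    · simp [hij]
    · rw [if_neg (fun h => hij (Subtype.ext h)), if_neg hij]
  have hrkV : Module.finrank ℝ V = SB.card := by
    rw [hV, finrank_span_eq_card (li_of_dot _ hdotB'), Fintype.card_coe]
  have hrkW : Module.finrank ℝ W = SA.card := by
    rw [hW, finrank_span_eq_card (li_of_dot _ hdotA'), Fintype.card_coe]
  -- injectivity of P
  have hPinj : Function.Injective (Matrix.mulVecLin P) := by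
    have h1 : P⁻¹ * P = 1 := Matrix.nonsing_inv_mul P hP
    intro x y hxy
    have := congrArg (fun z => P⁻¹ *ᵥ z) hxy
    simpa [Matrix.mulVecLin_apply, Matrix.mulVec_mulVec, h1, Matrix.one_mulVec] using this
  set V' : Submodule ℝ (Fin N → ℝ) := V.map (Matrix.mulVecLin P) with hV'
  have hrkV' : Module.finrank ℝ V' = SB.card := by
    rw [hV', ← (Submodule.equivMapOfInjective _ hPinj V).finrank_eq, hrkV]
  -- dimension count
  have hcardA : (Finset.univ.filter fun i => 0 < hA.eigenvalues i).card + SA.card = N := by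
    rw [hSA]
    simpa using Finset.card_filter_add_card_filter_not
      (s := (Finset.univ : Finset (Fin N))) (fun i => 0 < hA.eigenvalues i)
  have hsup : Module.finrank ℝ (V' ⊔ W : Submodule ℝ (Fin N → ℝ)) ≤ N := by
    have := Submodule.finrank_le (V' ⊔ W : Submodule ℝ (Fin N → ℝ))
    rwa [Module.finrank_fintype_fun_eq_card, Fintype.card_fin] at this
  have hinf : 0 < Module.finrank ℝ (V' ⊓ W : Submodule ℝ (Fin N → ℝ)) := by
    have heq := Submodule.finrank_sup_add_finrank_inf_eq V' W
    rw [hrkV', hrkW] at heq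
    omega
  -- get a nonzero vector in the intersection
  have : Nontrivial (V' ⊓ W : Submodule ℝ (Fin N → ℝ)) := Module.finrank_pos_iff.mp hinf
  obtain ⟨x0, hx0ne⟩ := exists_ne (0 : (V' ⊓ W : Submodule ℝ (Fin N → ℝ)))
  have hx0V' : (x0 : Fin N → ℝ) ∈ V' := x0.2.1
  have hx0W : (x0 : Fin N → ℝ) ∈ W := x0.2.2
  have hx0 : (x0 : Fin N → ℝ) ≠ 0 := fun h => hx0ne (Subtype.ext h)
  -- x0 = P *ᵥ y with y ∈ V, y ≠ 0
  obtain ⟨y, hyV, hyx⟩ := Submodule.mem_map.mp hx0V'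
  rw [Matrix.mulVecLin_apply] at hyx
  have hy0 : y ≠ 0 := by
    rintro rfl
    rw [Matrix.mulVec_zero] at hyx
    exact hx0 hyx.symm
  -- quadratic form of B at y is positive
  obtain ⟨cB, hcB⟩ := (Submodule.mem_span_range_iff_exists_fun ℝ).mp hyV
  have hqB : 0 < y ⬝ᵥ (B *ᵥ y) := by
    rw [← hcB, quad_eq B hB.eigenvalues vB hdotB hevB SB cB]
    apply Finset.sum_pos'
    · intro i _
      have hi : 0 < hB.eigenvalues i := (Finset.mem_filter.mp i.2).2
      positivity
    · by_contra hc
      push_neg at hc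
      have hc0 : ∀ i, cB i = 0 := by
        intro i
        have h1 := hc i (Finset.mem_univ i)
        have hi : 0 < hB.eigenvalues i := (Finset.mem_filter.mp i.2).2
        by_contra hne
        have hsq : 0 < cB i ^ 2 := by positivity
        nlinarith
      apply hy0
      rw [← hcB]
      simp [hc0]
  -- quadratic form of A at x0 is nonpositive
  obtain ⟨cA, hcA⟩ := (Submodule.mem_span_range_iff_exists_fun ℝ).mp hx0W
  have hqA : (x0 : Fin N → ℝ) ⬝ᵥ (A *ᵥ (x0 : Fin N → ℝ)) ≤ 0 := by
    rw [← hcA, quad_eq A hA.eigenvalues vA hdotA hevA SA cA]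
    apply Finset.sum_nonpos
    intro i _
    have hi : ¬ 0 < hA.eigenvalues i := (Finset.mem_filter.mp i.2).2
    push_neg at hi
    nlinarith [sq_nonneg (cA i)]
  -- but they are equal
  have hkey : y ⬝ᵥ (B *ᵥ y) = (x0 : Fin N → ℝ) ⬝ᵥ (A *ᵥ (x0 : Fin N → ℝ)) := by
    rw [hBe, ← hyx]
    rw [show (Pᵀ * A * P) *ᵥ y = Pᵀ *ᵥ (A *ᵥ (P *ᵥ y)) by
      rw [Matrix.mulVec_mulVec, Matrix.mulVec_mulVec]]
    rw [Matrix.dotProduct_mulVec, Matrix.vecMul_transpose]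
  linarith [hkey ▸ hqB]
lemma posEigCount_herm {N : ℕ} {M : Matrix (Fin N) (Fin N) ℝ} (hM : M.IsHermitian) :
    posEigCount M = (Finset.univ.filter fun i => 0 < hM.eigenvalues i).card := by
  rw [posEigCount, roots_charpoly_complex hM, Multiset.filter_map, Multiset.card_map]
  have h : ∀ a ∈ (Finset.univ : Finset (Fin N)).val,
      ((fun z : ℂ => z.im = 0 ∧ 0 < z.re) ∘ fun i : Fin N => ((hM.eigenvalues i : ℝ) : ℂ)) a
        ↔ 0 < hM.eigenvalues a := by
    intro a _; simp
  rw [Multiset.filter_congr h]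
  rfl

lemma negEigCount_herm {N : ℕ} {M : Matrix (Fin N) (Fin N) ℝ} (hM : M.IsHermitian) :
    negEigCount M = (Finset.univ.filter fun i => hM.eigenvalues i < 0).card := by
  rw [negEigCount, roots_charpoly_complex hM, Multiset.filter_map, Multiset.card_map]
  have h : ∀ a ∈ (Finset.univ : Finset (Fin N)).val,
      ((fun z : ℂ => z.im = 0 ∧ z.re < 0) ∘ fun i : Fin N => ((hM.eigenvalues i : ℝ) : ℂ)) a
        ↔ hM.eigenvalues a < 0 := by
    intro a _; simp
  rw [Multiset.filter_congr h]
  rfl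

open Classical in
lemma rank_eq_pos_add_neg {N : ℕ} {M : Matrix (Fin N) (Fin N) ℝ} (hM : M.IsHermitian) :
    M.rank = (Finset.univ.filter fun i => 0 < hM.eigenvalues i).card
      + (Finset.univ.filter fun i => hM.eigenvalues i < 0).card := by
  rw [hM.rank_eq_card_non_zero_eigs, Fintype.card_subtype]
  rw [show (Finset.univ.filter fun i => hM.eigenvalues i ≠ 0)
      = (Finset.univ.filter fun i => 0 < hM.eigenvalues i)
        ∪ (Finset.univ.filter fun i => hM.eigenvalues i < 0) from ?_]
  · refine Finset.card_union_of_disjoint ?_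
    rw [Finset.disjoint_left]
    intro a ha hb
    have h1 := (Finset.mem_filter.mp ha).2
    have h2 := (Finset.mem_filter.mp hb).2
    linarith
  · ext i
    simp only [Finset.mem_filter, Finset.mem_union, Finset.mem_univ, true_and]
    constructor
    · intro h; rcases h.lt_or_gt with h' | h'
      · exact Or.inr h'
      · exact Or.inl h'
    · rintro (h | h) <;> [exact ne_of_gt h; exact ne_of_lt h]

theorem sylvester_inertia_diagonal_scaling {N : ℕ} (T' : Matrix (Fin N) (Fin N) ℝ)
    (hT' : T'.IsSymm) (f g : Fin N → ℝ) (hf : ∀ i, 0 < f i) (hg : ∀ i, 0 < g i) :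
    (∀ z : ℂ, (((Matrix.diagonal f * T' * Matrix.diagonal g).map
        (algebraMap ℝ ℂ)).charpoly).IsRoot z → z.im = 0) ∧
    posEigCount (Matrix.diagonal f * T' * Matrix.diagonal g) = posEigCount T' ∧
    negEigCount (Matrix.diagonal f * T' * Matrix.diagonal g) = negEigCount T' := by
  classical
  set E : Matrix (Fin N) (Fin N) ℝ := Matrix.diagonal (fun i => Real.sqrt (f i * g i)) with hE
  set S : Matrix (Fin N) (Fin N) ℝ := E * T' * E with hS_def
  have hT'h : T'.IsHermitian := isHermitian_of_isSymm hT'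
  have hSsymm : S.IsSymm := by
    rw [Matrix.IsSymm, hS_def, hE]
    simp [Matrix.transpose_mul, Matrix.diagonal_transpose, hT'.eq, mul_assoc]
  have hS : S.IsHermitian := isHermitian_of_isSymm hSsymm
  have hdetE : IsUnit E.det := by
    rw [hE, Matrix.det_diagonal]
    refine isUnit_iff_ne_zero.mpr (ne_of_gt (Finset.prod_pos fun i _ => ?_))
    exact Real.sqrt_pos.mpr (mul_pos (hf i) (hg i))
  -- similarity between T and S
  set Pd : Matrix (Fin N) (Fin N) ℝ := Matrix.diagonal (fun i => Real.sqrt (f i / g i)) with hPd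
  set Qd : Matrix (Fin N) (Fin N) ℝ := Matrix.diagonal (fun i => Real.sqrt (g i / f i)) with hQd
  have hPQ : Pd * Qd = 1 := by
    rw [hPd, hQd, Matrix.diagonal_mul_diagonal]
    have : (fun i => Real.sqrt (f i / g i) * Real.sqrt (g i / f i)) = fun _ => (1 : ℝ) := by
      funext i
      rw [← Real.sqrt_mul (div_nonneg (hf i).le (hg i).le), div_mul_div_comm,
        mul_comm (g i) (f i), div_self (mul_pos (hf i) (hg i)).ne', Real.sqrt_one]
    rw [this, Matrix.diagonal_one]
  have hTeq : Matrix.diagonal f * T' * Matrix.diagonal g = Pd * S * Qd := by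
    have h1 : Pd * E = Matrix.diagonal f := by
      rw [hPd, hE, Matrix.diagonal_mul_diagonal]
      have : (fun i => Real.sqrt (f i / g i) * Real.sqrt (f i * g i)) = f := by
        funext i
        rw [← Real.sqrt_mul (div_nonneg (hf i).le (hg i).le)]
        rw [show f i / g i * (f i * g i) = (f i) ^ 2 from by
          field_simp [(hg i).ne']]
        exact Real.sqrt_sq (hf i).le
      rw [this]
    have h2 : E * Qd = Matrix.diagonal g := by
      rw [hE, hQd, Matrix.diagonal_mul_diagonal]
      have : (fun i => Real.sqrt (f i * g i) * Real.sqrt (g i / f i)) = g := by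
        funext i
        rw [← Real.sqrt_mul (mul_nonneg (hf i).le (hg i).le)]
        rw [show f i * g i * (g i / f i) = (g i) ^ 2 from by
          field_simp [(hf i).ne']]
        exact Real.sqrt_sq (hg i).le
      rw [this]
    calc Matrix.diagonal f * T' * Matrix.diagonal g
        = (Pd * E) * T' * (E * Qd) := by rw [h1, h2]
      _ = Pd * S * Qd := by rw [hS_def]; noncomm_ring
  have hchar : ((Matrix.diagonal f * T' * Matrix.diagonal g).map (algebraMap ℝ ℂ)).charpoly
      = (S.map (algebraMap ℝ ℂ)).charpoly := by
    rw [Matrix.charpoly_map, Matrix.charpoly_map, hTeq, charpoly_mul_mul _ _ _ hPQ]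
  -- inertia of S equals inertia of T'
  have hST' : S = Eᵀ * T' * E := by rw [hS_def, hE, Matrix.diagonal_transpose]
  have hdetEinv : IsUnit (E⁻¹).det := E.isUnit_nonsing_inv_det hdetE
  have hT'S : T' = (E⁻¹)ᵀ * S * E⁻¹ := by
    rw [Matrix.transpose_nonsing_inv, hE, Matrix.diagonal_transpose, ← hE]
    have h1 := Matrix.nonsing_inv_mul E hdetE
    have h2 := Matrix.mul_nonsing_inv E hdetE
    rw [hS_def, show E * T' * E = E * (T' * E) from by rw [mul_assoc], ← mul_assoc, h1, one_mul,
      mul_assoc, h2, mul_one]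
  have hpos : (Finset.univ.filter fun i => 0 < hS.eigenvalues i).card
      = (Finset.univ.filter fun i => 0 < hT'h.eigenvalues i).card := by
    refine le_antisymm (posCount_le T' S E hT'h hS hdetE hST') ?_
    exact posCount_le S T' E⁻¹ hS hT'h hdetEinv hT'S
  have hrank : S.rank = T'.rank := by
    rw [hS_def, show E * T' * E = E * (T' * E) from by rw [mul_assoc]]
    rw [Matrix.rank_mul_eq_right_of_isUnit_det E _ hdetE,
      Matrix.rank_mul_eq_left_of_isUnit_det E _ hdetE]
  have hneg : (Finset.univ.filter fun i => hS.eigenvalues i < 0).card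
      = (Finset.univ.filter fun i => hT'h.eigenvalues i < 0).card := by
    have h1 := rank_eq_pos_add_neg hS
    have h2 := rank_eq_pos_add_neg hT'h
    omega
  refine ⟨?_, ?_, ?_⟩
  · intro z hz
    rw [hchar] at hz
    have hne : ((S.map (algebraMap ℝ ℂ)).charpoly) ≠ 0 := (Matrix.charpoly_monic _).ne_zero
    have hmem : z ∈ (S.map (algebraMap ℝ ℂ)).charpoly.roots :=
      Polynomial.mem_roots'.mpr ⟨hne, hz⟩
    rw [roots_charpoly_complex hS] at hmem
    obtain ⟨i, _, rfl⟩ := Multiset.mem_map.mp hmem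
    simp
  · have hposT : posEigCount (Matrix.diagonal f * T' * Matrix.diagonal g) = posEigCount S := by
      rw [posEigCount, posEigCount, hchar]
    rw [hposT, posEigCount_herm hS, posEigCount_herm hT'h]
    exact hpos
  · have hnegT : negEigCount (Matrix.diagonal f * T' * Matrix.diagonal g) = negEigCount S := by
      rw [negEigCount, negEigCount, hchar]
    rw [hnegT, negEigCount_herm hS, negEigCount_herm hT'h]
    exact hneg
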